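/- Let ‖·‖ be a norm on ℝ^k with dual norm ‖·‖_*, let p̂ ∈ ℝ^k with Σ_i p̂_i = 1, let v ∈ ℝ^k, and let θ ≥ 0. Then inf over p ∈ ℝ^k with Σ_i p_i = 1 and ‖p − p̂‖ ≤ θ of Σ_i p_i v_i equals Σ_i p̂_i v_i − θ · inf_{c ∈ ℝ} ‖v − c·𝟙‖_*, where 𝟙 ∈ ℝ^k is the all-ones vector. In particular, the infimum of the linear objective over the norm ball intersected with the probability simplex Δ^k around p̂ ∈ Δ^k is bounded below by Σ_i p̂_i v_i − θ·‖v‖_*. -/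

import Mathlib

namespace NBR

variable {k : ℕ} {N : (Fin k → ℝ) → ℝ}

lemma zero' (hNzero : ∀ x : Fin k → ℝ, N x = 0 ↔ x = 0) : N 0 = 0 := (hNzero 0).2 rfl

lemma neg' (hNsmul : ∀ (a : ℝ) (x : Fin k → ℝ), N (a • x) = |a| * N x) (x : Fin k → ℝ) :
    N (-x) = N x := by
  have := hNsmul (-1) x
  simpa using this

lemma nonneg' (hNzero : ∀ x : Fin k → ℝ, N x = 0 ↔ x = 0)
    (hNsmul : ∀ (a : ℝ) (x : Fin k → ℝ), N (a • x) = |a| * N x)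
    (hNadd : ∀ x y : Fin k → ℝ, N (x + y) ≤ N x + N y) (x : Fin k → ℝ) : 0 ≤ N x := by
  have h0 : N 0 = 0 := zero' hNzero
  have h1 := hNadd x (-x)
  rw [add_neg_cancel, h0, neg' hNsmul] at h1
  linarith

lemma sum_le' (hNzero : ∀ x : Fin k → ℝ, N x = 0 ↔ x = 0)
    (hNadd : ∀ x y : Fin k → ℝ, N (x + y) ≤ N x + N y)
    {ι : Type*} (s : Finset ι) (f : ι → Fin k → ℝ) :
    N (∑ i ∈ s, f i) ≤ ∑ i ∈ s, N (f i) := by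
  classical
  induction s using Finset.induction_on with
  | empty => simp [zero' hNzero]
  | insert _ _ h ih =>
    rw [Finset.sum_insert h, Finset.sum_insert h]
    exact le_trans (hNadd _ _) (by linarith)

lemma upper' (hNzero : ∀ x : Fin k → ℝ, N x = 0 ↔ x = 0)
    (hNsmul : ∀ (a : ℝ) (x : Fin k → ℝ), N (a • x) = |a| * N x)
    (hNadd : ∀ x y : Fin k → ℝ, N (x + y) ≤ N x + N y) :
    ∃ C : ℝ, 0 ≤ C ∧ ∀ x : Fin k → ℝ, N x ≤ C * ‖x‖ := by
  refine ⟨∑ i, N (Pi.single i 1), Finset.sum_nonneg fun i _ => nonneg' hNzero hNsmul hNadd _, ?_⟩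
  intro x
  have hx : x = ∑ i, x i • (Pi.single i (1:ℝ) : Fin k → ℝ) := by
    have h1 : ∀ i : Fin k, x i • (Pi.single i (1:ℝ) : Fin k → ℝ) = Pi.single i (x i) := by
      intro i; ext j; by_cases h : j = i <;> simp [h, Pi.single_apply]
    simp only [h1]
    exact (Finset.univ_sum_single x).symm
  calc N x = N (∑ i, x i • (Pi.single i (1:ℝ) : Fin k → ℝ)) := by rw [← hx]
    _ ≤ ∑ i, N (x i • (Pi.single i (1:ℝ) : Fin k → ℝ)) := sum_le' hNzero hNadd _ _
    _ = ∑ i, |x i| * N (Pi.single i 1) := by simp [hNsmul]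
    _ ≤ ∑ i, ‖x‖ * N (Pi.single i 1) := by
        refine Finset.sum_le_sum fun i _ => mul_le_mul_of_nonneg_right ?_
          (nonneg' hNzero hNsmul hNadd _)
        simpa using norm_le_pi_norm x i
    _ = (∑ i, N (Pi.single i 1)) * ‖x‖ := by rw [← Finset.mul_sum, mul_comm]
      
lemma cont' (hNzero : ∀ x : Fin k → ℝ, N x = 0 ↔ x = 0)
    (hNsmul : ∀ (a : ℝ) (x : Fin k → ℝ), N (a • x) = |a| * N x)
    (hNadd : ∀ x y : Fin k → ℝ, N (x + y) ≤ N x + N y) : Continuous N := by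
  obtain ⟨C, hC0, hC⟩ := upper' hNzero hNsmul hNadd
  refine (LipschitzWith.of_dist_le_mul (K := C.toNNReal) (f := N) ?_).continuous
  intro x y
  have hsub : ∀ a b : Fin k → ℝ, N a - N b ≤ N (a - b) := by
    intro a b
    have := hNadd (a - b) b
    simpa using this
  rw [Real.dist_eq, dist_eq_norm, Real.coe_toNNReal _ hC0]
  have h1 := hsub x y
  have h2 := hsub y x
  rw [show y - x = -(x - y) by ring, neg' hNsmul] at h2
  have := hC (x - y)
  rw [abs_sub_le_iff]
  constructor <;> linarith

lemma lower' (hk : 0 < k) (hNzero : ∀ x : Fin k → ℝ, N x = 0 ↔ x = 0)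
    (hNsmul : ∀ (a : ℝ) (x : Fin k → ℝ), N (a • x) = |a| * N x)
    (hNadd : ∀ x y : Fin k → ℝ, N (x + y) ≤ N x + N y) :
    ∃ m : ℝ, 0 < m ∧ ∀ x : Fin k → ℝ, m * ‖x‖ ≤ N x := by
  have hcont := cont' hNzero hNsmul hNadd
  have hne : Nonempty (Fin k) := ⟨⟨0, hk⟩⟩
  have hsph : (Metric.sphere (0 : Fin k → ℝ) 1).Nonempty :=
    NormedSpace.sphere_nonempty.2 (by norm_num)
  obtain ⟨x0, hx0, hmin⟩ :=
    (isCompact_sphere (0 : Fin k → ℝ) 1).exists_isMinOn hsph hcont.continuousOn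
  have hx0norm : ‖x0‖ = 1 := by simpa using hx0
  have hx0ne : x0 ≠ 0 := by
    intro h; rw [h] at hx0norm; simp at hx0norm
  have hm0 : 0 < N x0 :=
    lt_of_le_of_ne (nonneg' hNzero hNsmul hNadd x0)
      (fun h => hx0ne ((hNzero x0).1 h.symm))
  refine ⟨N x0, hm0, ?_⟩
  intro x
  rcases eq_or_ne x 0 with rfl | hx
  · simp [zero' hNzero]
  · have hxn : (0:ℝ) < ‖x‖ := norm_pos_iff.2 hx
    have hmem : ‖x‖⁻¹ • x ∈ Metric.sphere (0 : Fin k → ℝ) 1 := by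
      simp [norm_smul, abs_of_nonneg (inv_nonneg.2 (norm_nonneg x)), inv_mul_cancel₀ hxn.ne']
    have h1 : N x0 ≤ N (‖x‖⁻¹ • x) := isMinOn_iff.1 hmin _ hmem
    rw [hNsmul, abs_inv, abs_norm] at h1
    have := (mul_le_mul_of_nonneg_right h1 (norm_nonneg x))
    calc N x0 * ‖x‖ ≤ ‖x‖⁻¹ * N x * ‖x‖ := this
      _ = N x := by field_simp
      
lemma bdd' (hk : 0 < k) (hNzero : ∀ x : Fin k → ℝ, N x = 0 ↔ x = 0)
    (hNsmul : ∀ (a : ℝ) (x : Fin k → ℝ), N (a • x) = |a| * N x)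
    (hNadd : ∀ x y : Fin k → ℝ, N (x + y) ≤ N x + N y) (y : Fin k → ℝ) :
    BddAbove {t : ℝ | ∃ x : Fin k → ℝ, N x ≤ 1 ∧ t = ∑ i, x i * y i} := by
  obtain ⟨m, hm, hlow⟩ := lower' hk hNzero hNsmul hNadd
  refine ⟨(1/m) * ∑ i, |y i|, ?_⟩
  rintro t ⟨x, hx, rfl⟩
  have hxn : ‖x‖ ≤ 1/m := (le_div_iff₀ hm).2 (by nlinarith [hlow x])
  calc ∑ i, x i * y i ≤ ∑ i, |x i * y i| := Finset.sum_le_sum fun i _ => le_abs_self _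
    _ = ∑ i, |x i| * |y i| := by simp [abs_mul]
    _ ≤ ∑ i, (1/m) * |y i| := by
        refine Finset.sum_le_sum fun i _ => mul_le_mul_of_nonneg_right ?_ (abs_nonneg _)
        exact le_trans (by simpa using norm_le_pi_norm x i) hxn
    _ = (1/m) * ∑ i, |y i| := by rw [Finset.mul_sum]

end NBR

/-- **Ball-constrained robust one-step values are regularized values.**
For any norm `N` on `ℝ^k` with dual norm `N*`, nominal `p̂` with `Σ p̂ = 1`, values `v`
and radius `θ ≥ 0`,
`inf { ⟨p,v⟩ : Σ p = 1, N(p − p̂) ≤ θ } = ⟨p̂,v⟩ − θ·inf_{c∈ℝ} N*(v − c·𝟙)`.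
In particular, on the norm ball intersected with the simplex around `p̂ ∈ Δ^k` the linear
objective is bounded below by `⟨p̂,v⟩ − θ·N*(v)`. -/
theorem norm_ball_robust_regularization
    (k : ℕ) (hk : 0 < k)
    (N : (Fin k → ℝ) → ℝ)
    (hNzero : ∀ x : Fin k → ℝ, N x = 0 ↔ x = 0)
    (hNsmul : ∀ (a : ℝ) (x : Fin k → ℝ), N (a • x) = |a| * N x)
    (hNadd : ∀ x y : Fin k → ℝ, N (x + y) ≤ N x + N y)
    (phat : Fin k → ℝ) (hphat : (∑ i, phat i) = 1)
    (v : Fin k → ℝ) (θ : ℝ) (hθ : 0 ≤ θ) :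
    let Nstar : (Fin k → ℝ) → ℝ := fun y =>
      sSup {t : ℝ | ∃ x : Fin k → ℝ, N x ≤ 1 ∧ t = ∑ i, x i * y i}
    (sInf {t : ℝ | ∃ p : Fin k → ℝ, (∑ i, p i) = 1 ∧ N (p - phat) ≤ θ ∧
          t = ∑ i, p i * v i}
        = (∑ i, phat i * v i)
            - θ * sInf {s : ℝ | ∃ c : ℝ, s = Nstar (fun i => v i - c)}) ∧
    (phat ∈ stdSimplex ℝ (Fin k) →
      ∀ p ∈ stdSimplex ℝ (Fin k), N (p - phat) ≤ θ →
        (∑ i, phat i * v i) - θ * Nstar v ≤ ∑ i, p i * v i) := by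
  intro Nstar
  have hN0 : N 0 = 0 := NBR.zero' hNzero
  have hNneg : ∀ x : Fin k → ℝ, N (-x) = N x := NBR.neg' hNsmul
  have hNnn : ∀ x : Fin k → ℝ, 0 ≤ N x := NBR.nonneg' hNzero hNsmul hNadd
  have hbdd : ∀ y : Fin k → ℝ, BddAbove {t : ℝ | ∃ x : Fin k → ℝ, N x ≤ 1 ∧ t = ∑ i, x i * y i} :=
    NBR.bdd' hk hNzero hNsmul hNadd
  have hmem0 : ∀ y : Fin k → ℝ, (0:ℝ) ∈ {t : ℝ | ∃ x : Fin k → ℝ, N x ≤ 1 ∧ t = ∑ i, x i * y i} :=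
    fun y => ⟨0, by simp [hN0], by simp⟩
  have hNstar_nonneg : ∀ y : Fin k → ℝ, 0 ≤ Nstar y := fun y => le_csSup (hbdd y) (hmem0 y)
  -- general scaling bound against Nstar
  have hfle2 : ∀ (y w : Fin k → ℝ), (∑ i, w i * y i) ≤ Nstar y * N w := by
    intro y w
    rcases eq_or_lt_of_le (hNnn w) with h | h
    · have hw : w = 0 := (hNzero w).1 h.symm
      simp [hw, hN0]
    · have hmem : (N w)⁻¹ * ∑ i, w i * y i ∈
          {t : ℝ | ∃ x : Fin k → ℝ, N x ≤ 1 ∧ t = ∑ i, x i * y i} := by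
        refine ⟨(N w)⁻¹ • w, ?_, ?_⟩
        · rw [hNsmul, abs_of_nonneg (inv_nonneg.2 h.le), inv_mul_cancel₀ h.ne']
        · rw [Finset.mul_sum]
          exact Finset.sum_congr rfl fun i _ => by
            simp [Pi.smul_apply, smul_eq_mul, mul_assoc]
      have h2 := le_csSup (hbdd y) hmem
      have h3 := mul_le_mul_of_nonneg_left h2 h.le
      rw [← mul_assoc, mul_inv_cancel₀ h.ne', one_mul] at h3
      linarith [h3]
  -- the sum-zero dual value S
  set Tset : Set ℝ :=
    {t : ℝ | ∃ u : Fin k → ℝ, (∑ i, u i) = 0 ∧ N u ≤ 1 ∧ t = ∑ i, u i * v i} with hTset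
  have hTne : Tset.Nonempty := ⟨0, 0, by simp, by simp [hN0], by simp⟩
  have hTbdd : BddAbove Tset := by
    refine (hbdd v).mono ?_
    rintro t ⟨u, _, hNu, rfl⟩
    exact ⟨u, hNu, rfl⟩
  set S : ℝ := sSup Tset with hSdef
  have hT0 : (0:ℝ) ∈ Tset := ⟨0, by simp, by simp [hN0], by simp⟩
  have hS0 : 0 ≤ S := le_csSup hTbdd hT0
  -- scaling bound against S, for sum-zero vectors
  have hfle : ∀ u : Fin k → ℝ, (∑ i, u i) = 0 → (∑ i, u i * v i) ≤ S * N u := by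
    intro u hu
    rcases eq_or_lt_of_le (hNnn u) with h | h
    · have hw : u = 0 := (hNzero u).1 h.symm
      simp [hw, hN0]
    · have hmem : (N u)⁻¹ * ∑ i, u i * v i ∈ Tset := by
        refine ⟨(N u)⁻¹ • u, ?_, ?_, ?_⟩
        · rw [Finset.sum_congr rfl fun i _ => (by simp [Pi.smul_apply, smul_eq_mul] :
            ((N u)⁻¹ • u) i = (N u)⁻¹ * u i), ← Finset.mul_sum, hu, mul_zero]
        · rw [hNsmul, abs_of_nonneg (inv_nonneg.2 h.le), inv_mul_cancel₀ h.ne']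
        · rw [Finset.mul_sum]
          exact Finset.sum_congr rfl fun i _ => by
            simp [Pi.smul_apply, smul_eq_mul, mul_assoc]
      have h2 := le_csSup hTbdd hmem
      have h3 := mul_le_mul_of_nonneg_left h2 h.le
      rw [← mul_assoc, mul_inv_cancel₀ h.ne', one_mul] at h3
      linarith [h3]
  -- Hahn-Banach extension constant c
  set A : Set ℝ :=
    {r : ℝ | ∃ h : Fin k → ℝ, (∑ i, h i) = 0 ∧
      r = (∑ i, h i * v i) - S * N (h - phat)} with hAdef
  have hAne : A.Nonempty := ⟨_, 0, by simp, rfl⟩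
  have hAub : ∀ h' : Fin k → ℝ, (∑ i, h' i) = 0 →
      ∀ r ∈ A, r ≤ S * N (h' + phat) - ∑ i, h' i * v i := by
    rintro h' hh' r ⟨h, hh, rfl⟩
    have hsum : (∑ i, (h + h') i) = 0 := by
      simp only [Pi.add_apply]
      rw [Finset.sum_add_distrib, hh, hh', add_zero]
    have h1 : (∑ i, (h + h') i * v i) ≤ S * N (h + h') := hfle _ hsum
    have h2 : N (h + h') ≤ N (h - phat) + N (h' + phat) := by
      have heq : h + h' = (h - phat) + (h' + phat) := by ring
      rw [heq]; exact hNadd _ _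
    have h3 : (∑ i, (h + h') i * v i) = (∑ i, h i * v i) + ∑ i, h' i * v i := by
      simp only [Pi.add_apply, add_mul]
      rw [Finset.sum_add_distrib]
    nlinarith [mul_le_mul_of_nonneg_left h2 hS0]
  have hAbdd : BddAbove A := by
    refine ⟨S * N ((0 : Fin k → ℝ) + phat) - ∑ i, (0:ℝ) * v i, ?_⟩
    intro r hr
    exact hAub 0 (by simp) r hr
  set c : ℝ := sSup A with hcdef
  have hcge : ∀ h : Fin k → ℝ, (∑ i, h i) = 0 →
      (∑ i, h i * v i) - S * N (h - phat) ≤ c :=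
    fun h hh => le_csSup hAbdd ⟨h, hh, rfl⟩
  have hcle : ∀ h' : Fin k → ℝ, (∑ i, h' i) = 0 →
      c ≤ S * N (h' + phat) - ∑ i, h' i * v i :=
    fun h' hh' => csSup_le hAne (hAub h' hh')
  set c' : ℝ := (∑ i, phat i * v i) - c with hc'def
  -- the key Hahn-Banach bound
  have hkey : ∀ x : Fin k → ℝ, N x ≤ 1 → (∑ i, x i * (v i - c')) ≤ S := by
    intro x hx
    set t : ℝ := ∑ i, x i with htdef
    set h : Fin k → ℝ := x - t • phat with hhdef
    have hh : (∑ i, h i) = 0 := by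
      simp only [hhdef, Pi.sub_apply, Pi.smul_apply, smul_eq_mul]
      rw [Finset.sum_sub_distrib, ← Finset.mul_sum, hphat, mul_one, ← htdef, sub_self]
    have hfh : (∑ i, h i * v i) = (∑ i, x i * v i) - t * ∑ i, phat i * v i := by
      simp only [hhdef, Pi.sub_apply, Pi.smul_apply, smul_eq_mul, sub_mul, mul_assoc]
      rw [Finset.sum_sub_distrib, ← Finset.mul_sum]
    have hgoal : (∑ i, x i * (v i - c')) = (∑ i, h i * v i) + t * c := by
      simp only [mul_sub]
      rw [Finset.sum_sub_distrib, ← Finset.sum_mul, ← htdef, hfh, hc'def]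
      ring
    have hmain : (∑ i, h i * v i) + t * c ≤ S * N x := by
      rcases lt_trichotomy t 0 with ht | ht | ht
      · -- t < 0
        have hpos : 0 < -t := by linarith
        have hsz : (∑ i, ((-t)⁻¹ • h) i) = 0 := by
          simp only [Pi.smul_apply, smul_eq_mul]
          rw [← Finset.mul_sum, hh, mul_zero]
        have htne : t ≠ 0 := by linarith
        have := hcge ((-t)⁻¹ • h) hsz
        have heq : (-t)⁻¹ • h - phat = (-t)⁻¹ • x := by
          rw [hhdef]
          ext i
          simp only [Pi.sub_apply, Pi.smul_apply, smul_eq_mul]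
          field_simp [htne]
          ring
        rw [heq, hNsmul, abs_of_nonneg (inv_nonneg.2 hpos.le)] at this
        have hfsc : (∑ i, ((-t)⁻¹ • h) i * v i) = (-t)⁻¹ * ∑ i, h i * v i := by
          rw [Finset.mul_sum]
          exact Finset.sum_congr rfl fun i _ => by
            simp [Pi.smul_apply, smul_eq_mul, mul_assoc]
        rw [hfsc] at this
        have h4 := mul_le_mul_of_nonneg_left this hpos.le
        have h6 : -t * ((-t)⁻¹ * (∑ i, h i * v i) - S * ((-t)⁻¹ * N x))
            = (∑ i, h i * v i) - S * N x := by
          field_simp [htne]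
          ring
        rw [h6] at h4
        linarith
      · -- t = 0
        have hx0 : h = x := by rw [hhdef, ht]; simp
        rw [ht, zero_mul, add_zero, hx0]
        exact hfle x (by rw [← htdef, ht])
      · -- t > 0
        have hsz : (∑ i, (t⁻¹ • h) i) = 0 := by
          simp only [Pi.smul_apply, smul_eq_mul]
          rw [← Finset.mul_sum, hh, mul_zero]
        have := hcle (t⁻¹ • h) hsz
        have heq : t⁻¹ • h + phat = t⁻¹ • x := by
          rw [hhdef]
          ext i
          simp only [Pi.add_apply, Pi.sub_apply, Pi.smul_apply, smul_eq_mul]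
          field_simp [ht.ne']
          ring
        rw [heq, hNsmul, abs_of_nonneg (inv_nonneg.2 ht.le)] at this
        have hfsc : (∑ i, (t⁻¹ • h) i * v i) = t⁻¹ * ∑ i, h i * v i := by
          rw [Finset.mul_sum]
          exact Finset.sum_congr rfl fun i _ => by
            simp [Pi.smul_apply, smul_eq_mul, mul_assoc]
        rw [hfsc] at this
        have h4 := mul_le_mul_of_nonneg_left this ht.le
        have h6 : t * (S * (t⁻¹ * N x) - t⁻¹ * ∑ i, h i * v i)
            = S * N x - ∑ i, h i * v i := by
          field_simp
        rw [h6] at h4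
        linarith
    have hlast : S * N x ≤ S := by
      calc S * N x ≤ S * 1 := mul_le_mul_of_nonneg_left hx hS0
        _ = S := mul_one S
    linarith [hgoal ▸ le_trans hmain hlast]
  -- the c-infimum equals S
  set Cset : Set ℝ := {s : ℝ | ∃ c0 : ℝ, s = Nstar (fun i => v i - c0)} with hCdef
  have hCne : Cset.Nonempty := ⟨Nstar (fun i => v i - 0), 0, rfl⟩
  have hCbdd : BddBelow Cset := by
    refine ⟨0, ?_⟩
    rintro s ⟨c0, rfl⟩
    exact hNstar_nonneg _
  have hIleS : sInf Cset ≤ S := by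
    have h1 : sInf Cset ≤ Nstar (fun i => v i - c') := csInf_le hCbdd ⟨c', rfl⟩
    have h2 : Nstar (fun i => v i - c') ≤ S := by
      refine csSup_le ⟨0, hmem0 _⟩ ?_
      rintro t ⟨x, hx, rfl⟩
      exact hkey x hx
    linarith
  have hSleI : S ≤ sInf Cset := by
    refine le_csInf hCne ?_
    rintro s ⟨c0, rfl⟩
    refine csSup_le hTne ?_
    rintro t ⟨u, hu, hNu, rfl⟩
    have heq : (∑ i, u i * v i) = ∑ i, u i * (v i - c0) := by
      simp only [mul_sub]
      rw [Finset.sum_sub_distrib, ← Finset.sum_mul, hu, zero_mul, sub_zero]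
    rw [heq]
    exact le_csSup (hbdd _) ⟨u, hNu, rfl⟩
  have hIS : sInf Cset = S := le_antisymm hIleS hSleI
  -- the primal set
  set Pset : Set ℝ := {t : ℝ | ∃ p : Fin k → ℝ, (∑ i, p i) = 1 ∧ N (p - phat) ≤ θ ∧
      t = ∑ i, p i * v i} with hPdef
  have hPne : Pset.Nonempty :=
    ⟨_, phat, hphat, by rw [sub_self, hN0]; exact hθ, rfl⟩
  have hLB : ∀ t ∈ Pset, (∑ i, phat i * v i) - θ * S ≤ t := by
    rintro t ⟨p, hp1, hpθ, rfl⟩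
    have hu : (∑ i, (phat - p) i) = 0 := by
      simp only [Pi.sub_apply]
      rw [Finset.sum_sub_distrib, hphat, hp1, sub_self]
    have h1 : (∑ i, (phat - p) i * v i) ≤ S * N (phat - p) := hfle _ hu
    have h2 : N (phat - p) = N (p - phat) := by
      rw [show phat - p = -(p - phat) from (neg_sub _ _).symm, hNneg]
    have h3 : S * N (p - phat) ≤ S * θ := mul_le_mul_of_nonneg_left hpθ hS0
    have h4 : (∑ i, (phat - p) i * v i) = (∑ i, phat i * v i) - ∑ i, p i * v i := by
      simp only [Pi.sub_apply, sub_mul]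
      rw [Finset.sum_sub_distrib]
    rw [h2] at h1
    linarith [mul_comm θ S]
  have hPbdd : BddBelow Pset := ⟨_, hLB⟩
  have hUB : ∀ t ∈ Tset, sInf Pset ≤ (∑ i, phat i * v i) - θ * t := by
    rintro t ⟨u, hu, hNu, rfl⟩
    have hmem : ((∑ i, phat i * v i) - θ * ∑ i, u i * v i) ∈ Pset := by
      refine ⟨phat - θ • u, ?_, ?_, ?_⟩
      · simp only [Pi.sub_apply, Pi.smul_apply, smul_eq_mul]
        rw [Finset.sum_sub_distrib, hphat, ← Finset.mul_sum, hu, mul_zero, sub_zero]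
      · have heq : phat - θ • u - phat = -(θ • u) := by ring
        rw [heq, hNneg, hNsmul, abs_of_nonneg hθ]
        calc θ * N u ≤ θ * 1 := mul_le_mul_of_nonneg_left hNu hθ
          _ = θ := mul_one θ
      · simp only [Pi.sub_apply, Pi.smul_apply, smul_eq_mul, sub_mul, mul_assoc]
        rw [Finset.sum_sub_distrib, ← Finset.mul_sum]
    exact csInf_le hPbdd hmem
  have hle : sInf Pset ≤ (∑ i, phat i * v i) - θ * S := by
    rcases eq_or_lt_of_le hθ with h0 | h0
    · have := hUB 0 hT0
      rw [← h0]
      simpa using this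
    · have hstep : ∀ t ∈ Tset, t ≤ ((∑ i, phat i * v i) - sInf Pset) / θ := by
        intro t ht
        rw [le_div_iff₀ h0]
        have := hUB t ht
        nlinarith
      have h1 : S ≤ ((∑ i, phat i * v i) - sInf Pset) / θ := csSup_le hTne hstep
      rw [le_div_iff₀ h0] at h1
      nlinarith
  have hge : (∑ i, phat i * v i) - θ * S ≤ sInf Pset := le_csInf hPne hLB
  constructor
  · rw [hIS]
    exact le_antisymm hle hge
  · intro _ p _ hNp
    have h1 : (∑ i, (phat - p) i * v i) ≤ Nstar v * N (phat - p) := hfle2 v _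
    have h2 : N (phat - p) = N (p - phat) := by
      rw [show phat - p = -(p - phat) from (neg_sub _ _).symm, hNneg]
    have h3 : Nstar v * N (p - phat) ≤ Nstar v * θ :=
      mul_le_mul_of_nonneg_left hNp (hNstar_nonneg v)
    have h4 : (∑ i, (phat - p) i * v i) = (∑ i, phat i * v i) - ∑ i, p i * v i := by
      simp only [Pi.sub_apply, sub_mul]
      rw [Finset.sum_sub_distrib]
    rw [h2] at h1
    linarith [mul_comm θ (Nstar v)]
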